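/- Purity ratio bound: Let ξ_AB be a positive semidefinite operator on H_A ⊗ H_B and ξ_B = tr_A(ξ_AB). Then tr[ξ_B²] ≤ |A| · tr[ξ_AB²] and tr[ξ_AB²] ≤ |A| · tr[ξ_B²]. -/

import Mathlib

open scoped Kronecker ComplexOrder Classical
open Matrix MeasureTheory

noncomputable section

/-- Positive semidefinite square root (junk value `0` if not PSD). -/
def psqrt {n : Type*} [Fintype n] [DecidableEq n] (ρ : Matrix n n ℂ) : Matrix n n ℂ :=
  if h : ρ.PosSemidef then
    (h.1.eigenvectorUnitary : Matrix n n ℂ) *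
      Matrix.diagonal (fun i => ((Real.sqrt (h.1.eigenvalues i) : ℝ) : ℂ)) *
      (star h.1.eigenvectorUnitary : Matrix n n ℂ)
  else 0

/-- Trace norm `‖M‖₁ = tr √(MᴴM)`. -/
def traceNorm {n : Type*} [Fintype n] [DecidableEq n] (M : Matrix n n ℂ) : ℝ :=
  (psqrt (Mᴴ * M)).trace.re

/-- Moore–Penrose real power of a Hermitian matrix via the spectral decomposition
(junk value `0` for non-Hermitian input).  For negative exponents, zero eigenvalues are
sent to zero (`Real.rpow` convention), i.e. inverses are generalized inverses. -/
def mpow {n : Type*} [Fintype n] [DecidableEq n] (ρ : Matrix n n ℂ) (p : ℝ) : Matrix n n ℂ :=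
  if h : ρ.IsHermitian then
    (h.eigenvectorUnitary : Matrix n n ℂ) *
      Matrix.diagonal (fun i => ((h.eigenvalues i ^ p : ℝ) : ℂ)) *
      (star h.eigenvectorUnitary : Matrix n n ℂ)
  else 0

/-- Subnormalized state: positive semidefinite with trace at most one. -/
def IsSubnormalized {n : Type*} [Fintype n] (ρ : Matrix n n ℂ) : Prop :=
  ρ.PosSemidef ∧ ρ.trace.re ≤ 1

/-- Normalized state: positive semidefinite with trace one. -/
def IsState {n : Type*} [Fintype n] (ρ : Matrix n n ℂ) : Prop :=
  ρ.PosSemidef ∧ ρ.trace = 1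

/-- Fidelity `F(ρ,σ) = ‖√ρ √σ‖₁`. -/
def fidelity {n : Type*} [Fintype n] [DecidableEq n] (ρ σ : Matrix n n ℂ) : ℝ :=
  traceNorm (psqrt ρ * psqrt σ)

/-- Generalized fidelity of subnormalized states. -/
def gFidelity {n : Type*} [Fintype n] [DecidableEq n] (ρ σ : Matrix n n ℂ) : ℝ :=
  fidelity ρ σ + Real.sqrt ((1 - ρ.trace.re) * (1 - σ.trace.re))

/-- Purified distance `P(ρ,σ) = √(1 − F̄(ρ,σ)²)`. -/
def pdist {n : Type*} [Fintype n] [DecidableEq n] (ρ σ : Matrix n n ℂ) : ℝ :=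
  Real.sqrt (1 - gFidelity ρ σ ^ 2)

/-- Partial trace over the first tensor factor. -/
def ptraceFst {a b : Type*} [Fintype a] (M : Matrix (a × b) (a × b) ℂ) : Matrix b b ℂ :=
  Matrix.of fun i j => ∑ k, M (k, i) (k, j)

/-- Partial trace over the second tensor factor. -/
def ptraceSnd {a b : Type*} [Fintype b] (M : Matrix (a × b) (a × b) ℂ) : Matrix a a ℂ :=
  Matrix.of fun i j => ∑ k, M (i, k) (j, k)

/-- Min-entropy `H_min(A|B)_ρ`, conditioning on the second factor. -/
def Hmin {a b : Type*} [Fintype a] [Fintype b] [DecidableEq a] [DecidableEq b]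
    (ρ : Matrix (a × b) (a × b) ℂ) : ℝ :=
  sSup {x : ℝ | ∃ σ : Matrix b b ℂ, IsState σ ∧
    (((2 : ℝ) ^ (-x) : ℝ) • ((1 : Matrix a a ℂ) ⊗ₖ σ) - ρ).PosSemidef}

/-- Max-entropy `H_max(A|B)_ρ`, conditioning on the second factor. -/
def Hmax {a b : Type*} [Fintype a] [Fintype b] [DecidableEq a] [DecidableEq b]
    (ρ : Matrix (a × b) (a × b) ℂ) : ℝ :=
  sSup {x : ℝ | ∃ σ : Matrix b b ℂ, IsState σ ∧
    x = Real.logb 2 (fidelity ρ ((1 : Matrix a a ℂ) ⊗ₖ σ) ^ 2)}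

/-- Smooth min-entropy `H_min^ε(A|B)_ρ`. -/
def sHmin {a b : Type*} [Fintype a] [Fintype b] [DecidableEq a] [DecidableEq b]
    (ε : ℝ) (ρ : Matrix (a × b) (a × b) ℂ) : ℝ :=
  sSup {x : ℝ | ∃ ρ' : Matrix (a × b) (a × b) ℂ,
    IsSubnormalized ρ' ∧ pdist ρ ρ' ≤ ε ∧ x = Hmin ρ'}

/-- Unconditional min-entropy `H_min(A)_ρ = −log‖ρ‖_∞`. -/
def HminU {n : Type*} [Fintype n] [DecidableEq n] (ρ : Matrix n n ℂ) : ℝ :=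
  -Real.logb 2 ‖Matrix.toEuclideanCLM (𝕜 := ℂ) ρ‖

/-- Unconditional max-entropy `H_max(A)_ρ = 2 log tr √ρ`. -/
def HmaxU {n : Type*} [Fintype n] [DecidableEq n] (ρ : Matrix n n ℂ) : ℝ :=
  2 * Real.logb 2 ((psqrt ρ).trace.re)

/-- Smooth unconditional min-entropy. -/
def sHminU {n : Type*} [Fintype n] [DecidableEq n] (ε : ℝ) (ρ : Matrix n n ℂ) : ℝ :=
  sSup {x : ℝ | ∃ ρ' : Matrix n n ℂ, IsSubnormalized ρ' ∧ pdist ρ ρ' ≤ ε ∧ x = HminU ρ'}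

/-- Smooth unconditional max-entropy. -/
def sHmaxU {n : Type*} [Fintype n] [DecidableEq n] (ε : ℝ) (ρ : Matrix n n ℂ) : ℝ :=
  sInf {x : ℝ | ∃ ρ' : Matrix n n ℂ, IsSubnormalized ρ' ∧ pdist ρ ρ' ≤ ε ∧ x = HmaxU ρ'}

/-- Collision entropy `H₂(A|B)_ρ`. -/
def H2 {a b : Type*} [Fintype a] [Fintype b] [DecidableEq a] [DecidableEq b]
    (ρ : Matrix (a × b) (a × b) ℂ) : ℝ :=
  sSup {x : ℝ | ∃ σ : Matrix b b ℂ, IsState σ ∧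
    x = -Real.logb 2
      (((((1 : Matrix a a ℂ) ⊗ₖ mpow σ (-(1/4))) * ρ *
          ((1 : Matrix a a ℂ) ⊗ₖ mpow σ (-(1/4)))) ^ 2).trace.re)}

/-- The extension `𝟙_n ⊗ T` of a linear map `T` on matrices, acting on the second factor. -/
def idTensorLmap {A B n : Type*} [Fintype A] [Fintype B] [Fintype n]
    (T : Matrix A A ℂ →ₗ[ℂ] Matrix B B ℂ) (M : Matrix (n × A) (n × A) ℂ) :
    Matrix (n × B) (n × B) ℂ :=
  Matrix.of fun i j => T (Matrix.of fun a a' => M (i.1, a) (j.1, a')) i.2 j.2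

/-- The extension `T ⊗ 𝟙_n` of a linear map `T` on matrices, acting on the first factor. -/
def lmapTensorId {A B n : Type*} [Fintype A] [Fintype B] [Fintype n]
    (T : Matrix A A ℂ →ₗ[ℂ] Matrix B B ℂ) (M : Matrix (A × n) (A × n) ℂ) :
    Matrix (B × n) (B × n) ℂ :=
  Matrix.of fun i j => T (Matrix.of fun a a' => M (a, i.2) (a', j.2)) i.1 j.1

/-- Complete positivity of a linear map on matrices. -/
def IsCPM {A B : Type*} [Fintype A] [Fintype B]
    (T : Matrix A A ℂ →ₗ[ℂ] Matrix B B ℂ) : Prop :=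
  ∀ (n : ℕ) (M : Matrix (Fin n × A) (Fin n × A) ℂ),
    M.PosSemidef → (idTensorLmap T M).PosSemidef

/-- The projector `|Φ⟩⟨Φ|` onto the maximally entangled state
`|Φ⟩ = |A|^{-1/2} ∑ₓ |x⟩|x⟩`. -/
def maxEntProj (A : Type*) [Fintype A] [DecidableEq A] : Matrix (A × A) (A × A) ℂ :=
  Matrix.of fun p q =>
    ((if p.1 = p.2 then 1 else 0) * (if q.1 = q.2 then 1 else 0)) / (Fintype.card A : ℂ)

/-- Choi–Jamiołkowski representation `J(T) = (𝟙_{A'} ⊗ T)(|Φ⟩⟨Φ|)`. -/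
def choi {A B : Type*} [Fintype A] [Fintype B] [DecidableEq A]
    (T : Matrix A A ℂ →ₗ[ℂ] Matrix B B ℂ) : Matrix (A × B) (A × B) ℂ :=
  idTensorLmap T (maxEntProj A)

/-- Conjugation of a bipartite operator by `U ⊗ 𝟙_E`. -/
def conjFst {A E : Type*} [Fintype A] [Fintype E] [DecidableEq A] [DecidableEq E]
    (U : Matrix.unitaryGroup A ℂ) (ρ : Matrix (A × E) (A × E) ℂ) :
    Matrix (A × E) (A × E) ℂ :=
  ((U : Matrix A A ℂ) ⊗ₖ (1 : Matrix E E ℂ)) * ρ *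
    (((U : Matrix A A ℂ)ᴴ) ⊗ₖ (1 : Matrix E E ℂ))

/-- The swap operator `F(u ⊗ v) = v ⊗ u` as a matrix. -/
def swapMat (A : Type*) [Fintype A] [DecidableEq A] : Matrix (A × A) (A × A) ℂ :=
  Matrix.of fun i j => if i.1 = j.2 ∧ i.2 = j.1 then 1 else 0


attribute [local instance] Matrix.frobeniusNormedAddCommGroup Matrix.frobeniusNormedSpace


section PurityAux

lemma prb_quad_eq {n : Type*} [Fintype n] [DecidableEq n]
    {ξ S : Matrix n n ℂ} (hS : S.IsHermitian) (hSS : S * S = ξ) (w : n → ℂ) :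
    star w ⬝ᵥ (ξ *ᵥ w) = ((∑ p, ‖(S *ᵥ w) p‖ ^ 2 : ℝ) : ℂ) := by
  rw [← hSS, ← Matrix.mulVec_mulVec, Matrix.dotProduct_mulVec]
  have h1 : star w ᵥ* S = star (S *ᵥ w) := by
    rw [Matrix.star_mulVec, hS.eq]
  rw [h1]
  push_cast
  simp only [dotProduct, Pi.star_apply]
  refine Finset.sum_congr rfl fun p _ => ?_
  rw [mul_comm, Complex.star_def, Complex.mul_conj']

lemma prb_core {A B : Type*} [Fintype A] [DecidableEq A] [Fintype B] [DecidableEq B]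
    {ξ S : Matrix (A × B) (A × B) ℂ} (hS : S.IsHermitian) (hSS : S * S = ξ)
    (v : A × B → ℂ) :
    star v ⬝ᵥ (ξ *ᵥ v) ≤
      (Fintype.card A : ℂ) * (star v ⬝ᵥ (((1 : Matrix A A ℂ) ⊗ₖ ptraceFst ξ) *ᵥ v)) := by
  set u : A → A → (A × B → ℂ) := fun k a p => if p.1 = k then v (a, p.2) else 0 with hu
  have hkr : ∀ (a a' : A) (i j : B),
      ((1 : Matrix A A ℂ) ⊗ₖ ptraceFst ξ) (a, i) (a', j)
        = if a = a' then ptraceFst ξ i j else 0 := by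
    intro a a' i j
    simp [Matrix.kroneckerMap_apply, Matrix.one_apply, ite_mul]
  have hsum : star v ⬝ᵥ (((1 : Matrix A A ℂ) ⊗ₖ ptraceFst ξ) *ᵥ v)
      = ∑ a, ∑ k, star (u k a) ⬝ᵥ (ξ *ᵥ (u k a)) := by
    have lhs : star v ⬝ᵥ (((1 : Matrix A A ℂ) ⊗ₖ ptraceFst ξ) *ᵥ v)
        = ∑ a, ∑ i, ∑ j, (starRingEnd ℂ) (v (a, i)) * (ptraceFst ξ i j * v (a, j)) := by
      simp only [dotProduct, Matrix.mulVec, Pi.star_apply, Fintype.sum_prod_type]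
      refine Finset.sum_congr rfl fun a _ => Finset.sum_congr rfl fun i _ => ?_
      simp only [hkr, ite_mul, zero_mul, Finset.mul_sum, mul_ite, mul_zero]
      rw [Finset.sum_comm]
      simp [Finset.sum_ite_eq, Complex.star_def]
    have rhs : ∀ (k a : A), star (u k a) ⬝ᵥ (ξ *ᵥ (u k a))
        = ∑ i, ∑ j, (starRingEnd ℂ) (v (a, i)) * (ξ (k, i) (k, j) * v (a, j)) := by
      intro k a
      simp only [dotProduct, Matrix.mulVec, Pi.star_apply, Fintype.sum_prod_type, hu]
      simp only [apply_ite (starRingEnd ℂ), map_zero, ite_mul, zero_mul, mul_ite, mul_zero,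
        Finset.sum_ite_irrel, Finset.sum_ite_eq', Finset.mem_univ, if_true, Complex.star_def,
        Finset.mul_sum]
      simp only [Finset.sum_const_zero, Finset.sum_ite_irrel, Finset.sum_ite_eq',
        Finset.mem_univ, if_true]
    rw [lhs]
    simp only [rhs]
    refine Finset.sum_congr rfl fun a _ => ?_
    conv_rhs => rw [Finset.sum_comm]
    refine Finset.sum_congr rfl fun i _ => ?_
    conv_rhs => rw [Finset.sum_comm]
    refine Finset.sum_congr rfl fun j _ => ?_
    simp [ptraceFst, Finset.mul_sum, Finset.sum_mul]
  have hv : v = ∑ a, u a a := by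
    funext p
    simp only [Finset.sum_apply, hu]
    simp
  rw [prb_quad_eq hS hSS, hsum]
  have hq : ∀ k a : A, star (u k a) ⬝ᵥ (ξ *ᵥ (u k a))
      = ((∑ p, ‖(S *ᵥ (u k a)) p‖ ^ 2 : ℝ) : ℂ) := fun k a => prb_quad_eq hS hSS _
  simp only [hq]
  have hcast : (Fintype.card A : ℂ) * ∑ a, ∑ k, ((∑ p, ‖(S *ᵥ (u k a)) p‖ ^ 2 : ℝ) : ℂ)
      = (((Fintype.card A : ℝ) * ∑ a, ∑ k, ∑ p, ‖(S *ᵥ (u k a)) p‖ ^ 2 : ℝ) : ℂ) := by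
    push_cast; ring
  rw [hcast, Complex.real_le_real]
  have hSv : S *ᵥ v = ∑ a, S *ᵥ (u a a) := by
    rw [hv]
    have := map_sum S.mulVecLin (fun a => u a a) Finset.univ
    simpa only [Matrix.mulVecLin_apply] using this
  rw [hSv]
  calc ∑ p, ‖(∑ a, S *ᵥ u a a) p‖ ^ 2
      ≤ ∑ p, ((Fintype.card A : ℝ) * ∑ a, ‖(S *ᵥ u a a) p‖ ^ 2) := by
        refine Finset.sum_le_sum fun p _ => ?_
        have h1 : ‖(∑ a, S *ᵥ u a a) p‖ ≤ ∑ a, ‖(S *ᵥ u a a) p‖ := by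
          rw [Finset.sum_apply]
          exact norm_sum_le _ _
        calc ‖(∑ a, S *ᵥ u a a) p‖ ^ 2 ≤ (∑ a, ‖(S *ᵥ u a a) p‖) ^ 2 :=
              pow_le_pow_left₀ (norm_nonneg _) h1 2
          _ ≤ (Fintype.card A : ℝ) * ∑ a, ‖(S *ᵥ u a a) p‖ ^ 2 := by
              simpa using sq_sum_le_card_mul_sum_sq
                (s := (Finset.univ : Finset A)) (f := fun a => ‖(S *ᵥ u a a) p‖)
    _ = (Fintype.card A : ℝ) * ∑ a, ∑ p, ‖(S *ᵥ u a a) p‖ ^ 2 := by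
        rw [← Finset.mul_sum, Finset.sum_comm]
    _ ≤ (Fintype.card A : ℝ) * ∑ a, ∑ k, ∑ p, ‖(S *ᵥ u k a) p‖ ^ 2 := by
        refine mul_le_mul_of_nonneg_left ?_ (by positivity)
        refine Finset.sum_le_sum fun a _ => ?_
        exact Finset.single_le_sum (f := fun k => ∑ p, ‖(S *ᵥ u k a) p‖ ^ 2)
          (fun k _ => by positivity) (Finset.mem_univ a)

lemma prb_herm_ptrace {A B : Type*} [Fintype A] [Fintype B]
    {ξ : Matrix (A × B) (A × B) ℂ} (hξ : ξ.IsHermitian) :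
    (ptraceFst ξ).IsHermitian := by
  ext i j
  simp only [Matrix.conjTranspose_apply, ptraceFst, Matrix.of_apply, star_sum]
  exact Finset.sum_congr rfl fun k _ => hξ.apply _ _

lemma prb_trace_sq_real {n : Type*} [Fintype n] {M : Matrix n n ℂ} (hM : M.IsHermitian) :
    (M * M).trace = ((∑ p, ∑ q, ‖M p q‖ ^ 2 : ℝ) : ℂ) := by
  simp only [Matrix.trace, Matrix.diag, Matrix.mul_apply]
  push_cast
  refine Finset.sum_congr rfl fun p _ => Finset.sum_congr rfl fun q _ => ?_
  rw [show M q p = star (M p q) from (hM.apply q p).symm, Complex.star_def, Complex.mul_conj']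

lemma prb_trace_diag {n : Type*} [Fintype n] {S : Matrix n n ℂ} (hS : S.IsHermitian)
    (M : Matrix n n ℂ) :
    (S * M * S).trace = ∑ i, star (fun p => S p i) ⬝ᵥ (M *ᵥ (fun p => S p i)) := by
  simp only [Matrix.trace, Matrix.diag, Matrix.mul_apply, dotProduct, Matrix.mulVec,
    Pi.star_apply]
  refine Finset.sum_congr rfl fun i _ => ?_
  simp only [Finset.sum_mul]
  conv_lhs => rw [Finset.sum_comm]
  refine Finset.sum_congr rfl fun p _ => ?_
  rw [show star (S p i) = S i p from hS.apply i p, Finset.mul_sum]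
  exact Finset.sum_congr rfl fun q _ => by ring

lemma prb_trace_xi_kron {A B : Type*} [Fintype A] [DecidableEq A] [Fintype B] [DecidableEq B]
    (ξ : Matrix (A × B) (A × B) ℂ) :
    (ξ * ((1 : Matrix A A ℂ) ⊗ₖ ptraceFst ξ)).trace = (ptraceFst ξ * ptraceFst ξ).trace := by
  have hkr : ∀ (a a' : A) (i j : B),
      ((1 : Matrix A A ℂ) ⊗ₖ ptraceFst ξ) (a, i) (a', j)
        = if a = a' then ptraceFst ξ i j else 0 := by
    intro a a' i j
    simp [Matrix.kroneckerMap_apply, Matrix.one_apply, ite_mul]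
  simp only [Matrix.trace, Matrix.diag, Matrix.mul_apply, Fintype.sum_prod_type]
  simp only [hkr, mul_ite, mul_zero, Finset.sum_ite_irrel, Finset.sum_const_zero,
    Finset.sum_ite_eq', Finset.mem_univ, if_true]
  rw [Finset.sum_comm]
  refine Finset.sum_congr rfl fun i _ => ?_
  rw [Finset.sum_comm]
  refine Finset.sum_congr rfl fun j _ => ?_
  simp only [ptraceFst, Matrix.of_apply, Finset.sum_mul]

end PurityAux

/-- **Purity ratio bound.** -/
theorem purity_ratio_bound
    {A B : Type*} [Fintype A] [DecidableEq A] [Fintype B] [DecidableEq B]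
    (ξ : Matrix (A × B) (A × B) ℂ) (hξ : ξ.PosSemidef) :
    (ptraceFst ξ ^ 2).trace ≤ (Fintype.card A : ℂ) * (ξ ^ 2).trace ∧
    (ξ ^ 2).trace ≤ (Fintype.card A : ℂ) * (ptraceFst ξ ^ 2).trace := by
  have hξh : ξ.IsHermitian := hξ.isHermitian
  set σ := ptraceFst ξ with hσdef
  have hσh : σ.IsHermitian := prb_herm_ptrace hξh
  obtain ⟨S, hS, hSS⟩ : ∃ S : Matrix (A × B) (A × B) ℂ, S.IsHermitian ∧ S * S = ξ := by
    open scoped MatrixOrder in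
    obtain ⟨X, hX, -, hXX⟩ := CFC.exists_sqrt_of_isSelfAdjoint_of_quasispectrumRestricts
      hξh (QuasispectrumRestricts.nnreal_of_nonneg hξ.nonneg)
    exact ⟨X, hX, hXX⟩
  constructor
  · rw [pow_two, pow_two, prb_trace_sq_real hσh, prb_trace_sq_real hξh]
    have hcst : (Fintype.card A : ℂ) * ((∑ p, ∑ q, ‖ξ p q‖ ^ 2 : ℝ) : ℂ)
        = (((Fintype.card A : ℝ) * (∑ p, ∑ q, ‖ξ p q‖ ^ 2) : ℝ) : ℂ) := by push_cast; ring
    rw [hcst, Complex.real_le_real]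
    have hstep1 : ∀ i j : B,
        ‖σ i j‖ ^ 2 ≤ (Fintype.card A : ℝ) * ∑ k, ∑ l, ‖ξ (k, i) (l, j)‖ ^ 2 := by
      intro i j
      have h0 : ‖σ i j‖ ≤ ∑ k, ‖ξ (k, i) (k, j)‖ := by
        have he : σ i j = ∑ k, ξ (k, i) (k, j) := rfl
        rw [he]
        exact norm_sum_le _ _
      calc ‖σ i j‖ ^ 2 ≤ (∑ k, ‖ξ (k, i) (k, j)‖) ^ 2 :=
            pow_le_pow_left₀ (norm_nonneg _) h0 2
        _ ≤ (Fintype.card A : ℝ) * ∑ k, ‖ξ (k, i) (k, j)‖ ^ 2 := by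
            simpa using sq_sum_le_card_mul_sum_sq (s := (Finset.univ : Finset A))
              (f := fun k => ‖ξ (k, i) (k, j)‖)
        _ ≤ (Fintype.card A : ℝ) * ∑ k, ∑ l, ‖ξ (k, i) (l, j)‖ ^ 2 := by
            refine mul_le_mul_of_nonneg_left (Finset.sum_le_sum fun k _ => ?_) (by positivity)
            exact Finset.single_le_sum (f := fun l => ‖ξ (k, i) (l, j)‖ ^ 2)
              (fun l _ => by positivity) (Finset.mem_univ k)
    calc ∑ i, ∑ j, ‖σ i j‖ ^ 2
        ≤ ∑ i, ∑ j, ((Fintype.card A : ℝ) * ∑ k, ∑ l, ‖ξ (k, i) (l, j)‖ ^ 2) :=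
          Finset.sum_le_sum fun i _ => Finset.sum_le_sum fun j _ => hstep1 i j
      _ = (Fintype.card A : ℝ) * ∑ i, ∑ j, ∑ k, ∑ l, ‖ξ (k, i) (l, j)‖ ^ 2 := by
          simp only [Finset.mul_sum]
      _ = (Fintype.card A : ℝ) * ∑ p, ∑ q, ‖ξ p q‖ ^ 2 := by
          congr 1
          calc ∑ i, ∑ j, ∑ k, ∑ l, ‖ξ (k, i) (l, j)‖ ^ 2
              = ∑ i, ∑ k, ∑ j, ∑ l, ‖ξ (k, i) (l, j)‖ ^ 2 :=
                Finset.sum_congr rfl fun i _ => Finset.sum_comm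
            _ = ∑ k, ∑ i, ∑ j, ∑ l, ‖ξ (k, i) (l, j)‖ ^ 2 := Finset.sum_comm
            _ = ∑ k, ∑ i, ∑ l, ∑ j, ‖ξ (k, i) (l, j)‖ ^ 2 :=
                Finset.sum_congr rfl fun k _ => Finset.sum_congr rfl fun i _ =>
                  Finset.sum_comm
            _ = ∑ p, ∑ q, ‖ξ p q‖ ^ 2 := by
                simp [Fintype.sum_prod_type]
  · rw [pow_two, pow_two]
    have e1 : (ξ * ξ).trace = (S * ξ * S).trace := by
      rw [trace_mul_cycle S ξ S, hSS]
    have e2 : (ξ * ((1 : Matrix A A ℂ) ⊗ₖ σ)).trace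
        = (S * ((1 : Matrix A A ℂ) ⊗ₖ σ) * S).trace := by
      rw [trace_mul_cycle S ((1 : Matrix A A ℂ) ⊗ₖ σ) S, hSS]
    calc (ξ * ξ).trace
        = ∑ i, star (fun p => S p i) ⬝ᵥ (ξ *ᵥ (fun p => S p i)) := by
          rw [e1, prb_trace_diag hS]
      _ ≤ ∑ i, (Fintype.card A : ℂ) *
            (star (fun p => S p i) ⬝ᵥ (((1 : Matrix A A ℂ) ⊗ₖ σ) *ᵥ (fun p => S p i))) :=
          Finset.sum_le_sum fun i _ => prb_core hS hSS _
      _ = (Fintype.card A : ℂ) * (S * ((1 : Matrix A A ℂ) ⊗ₖ σ) * S).trace := by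
          rw [prb_trace_diag hS, Finset.mul_sum]
      _ = (Fintype.card A : ℂ) * (σ * σ).trace := by
          rw [← e2, prb_trace_xi_kron]

end
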